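/- arXiv:1607.05467 — 3 statements merged into one kernel-verified Lean document; each statement's English description precedes it below -/
import Mathlib

section
/- Let γ > 2 and n ≥ 1. For every x ∈ ℝ² with ‖x‖ > √n, ∫_{B(0,√n)} (1 + ‖y−x‖₁)^{−γ} dy ≤ c_γ (1 + ‖x‖ − √n)^{2−γ}, where ‖·‖₁ is the ℓ¹ norm on ℝ² and c_γ depends only on γ. -/
open MeasureTheory

open Set

private lemma shift_mp (c : ℝ) : MeasurePreserving (fun x : ℝ => x + c) volume volume :=
  measurePreserving_add_right volume c

private lemma shift_emb (c : ℝ) : MeasurableEmbedding (fun x : ℝ => x + c) :=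
  (Homeomorph.addRight c).measurableEmbedding

private lemma lemA_int {γ c : ℝ} (hγ : 1 < γ) (hc : 0 < c) :
    IntegrableOn (fun x : ℝ => (c + x) ^ (-γ)) (Ioi 0) := by
  have h : IntegrableOn (fun x : ℝ => x ^ (-γ)) (Ioi c) :=
    integrableOn_Ioi_rpow_of_lt (by linarith) hc
  have h2 := ((shift_mp c).integrableOn_comp_preimage (shift_emb c)
    (f := fun x : ℝ => x ^ (-γ)) (s := Ioi c)).2 h
  have hpre : (fun x : ℝ => x + c) ⁻¹' Ioi c = Ioi 0 := by ext z; simp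
  rw [hpre] at h2
  exact h2.congr_fun (fun z _ => by simp [Function.comp, add_comm]) measurableSet_Ioi

private lemma lemA_val {γ c : ℝ} (hγ : 1 < γ) (hc : 0 < c) :
    ∫ x in Ioi (0:ℝ), (c + x) ^ (-γ) = c ^ (1 - γ) / (γ - 1) := by
  have hpre : (fun x : ℝ => x + c) ⁻¹' Ioi c = Ioi 0 := by ext z; simp
  have h := (shift_mp c).setIntegral_preimage_emb (shift_emb c)
    (fun x : ℝ => x ^ (-γ)) (Ioi c)
  rw [hpre] at h
  have heq : ∫ x in Ioi (0:ℝ), (c + x) ^ (-γ) = ∫ x in Ioi (0:ℝ), (x + c) ^ (-γ) := by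
    simp_rw [add_comm]
  rw [heq, h, integral_Ioi_rpow_of_lt (by linarith) hc]
  have h1 : -γ + 1 = 1 - γ := by ring
  rw [h1, div_eq_div_iff (by linarith) (by linarith)]
  ring

private lemma lemA {γ : ℝ} (hγ : 1 < γ) {c : ℝ} (hc : 0 < c) :
    Integrable (fun t : ℝ => (c + |t|) ^ (-γ)) ∧
      ∫ t : ℝ, (c + |t|) ^ (-γ) = 2 / (γ - 1) * c ^ (1 - γ) := by
  have hIoi : IntegrableOn (fun t : ℝ => (c + |t|) ^ (-γ)) (Ioi 0) :=
    (lemA_int hγ hc).congr_fun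
      (fun z hz => by rw [abs_of_pos hz]) measurableSet_Ioi
  have hIio : IntegrableOn (fun t : ℝ => (c + |t|) ^ (-γ)) (Iio 0) := by
    have h2 := ((Measure.measurePreserving_neg (volume : Measure ℝ)).integrableOn_comp_preimage
      (Homeomorph.neg ℝ).measurableEmbedding
      (f := fun t : ℝ => (c + |t|) ^ (-γ)) (s := Ioi 0)).2 hIoi
    have hpre : (fun x : ℝ => -x) ⁻¹' Ioi 0 = Iio 0 := by ext z; simp
    rw [hpre] at h2
    exact h2.congr_fun (fun z _ => by simp [Function.comp]) measurableSet_Iio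
  have hInt : Integrable (fun t : ℝ => (c + |t|) ^ (-γ)) := by
    have hIic : IntegrableOn (fun t : ℝ => (c + |t|) ^ (-γ)) (Iic 0) :=
      (integrableOn_Iic_iff_integrableOn_Iio).2 hIio
    have := hIic.union hIoi
    rwa [Iic_union_Ioi, integrableOn_univ] at this
  refine ⟨hInt, ?_⟩
  rw [integral_comp_abs (f := fun x => (c + x) ^ (-γ)), lemA_val hγ hc]
  ring

private lemma lemB {γ : ℝ} (hγ : 2 < γ) {d R : ℝ} (hdR : 0 < d - R) :
    IntegrableOn (fun l : ℝ => (d - l) ^ (1 - γ)) (Iic R) ∧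
      ∫ l in Iic R, (d - l) ^ (1 - γ) = (d - R) ^ (2 - γ) / (γ - 2) := by
  have hmp : MeasurePreserving (fun l : ℝ => d - l) volume volume := by
    have h2 := (shift_mp d).comp (Measure.measurePreserving_neg (volume : Measure ℝ))
    simpa [Function.comp_def, neg_add_eq_sub] using h2
  have hemb : MeasurableEmbedding (fun l : ℝ => d - l) := by
    have h := ((Homeomorph.neg ℝ).trans (Homeomorph.addRight d)).measurableEmbedding
    have hfe : (fun l : ℝ => d - l) = ⇑((Homeomorph.neg ℝ).trans (Homeomorph.addRight d)) := by
      ext z; simp [neg_add_eq_sub]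
    rwa [hfe]
  have hpre : (fun l : ℝ => d - l) ⁻¹' Ioi (d - R) = Iio R := by
    ext z; simp [sub_lt_sub_iff_left]
  have hint : IntegrableOn (fun x : ℝ => x ^ (1 - γ)) (Ioi (d - R)) :=
    integrableOn_Ioi_rpow_of_lt (by linarith) hdR
  have hIio : IntegrableOn (fun l : ℝ => (d - l) ^ (1 - γ)) (Iio R) := by
    have h2 := (hmp.integrableOn_comp_preimage hemb
      (f := fun x : ℝ => x ^ (1 - γ)) (s := Ioi (d - R))).2 hint
    rwa [hpre] at h2
  have hIic : IntegrableOn (fun l : ℝ => (d - l) ^ (1 - γ)) (Iic R) :=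
    (integrableOn_Iic_iff_integrableOn_Iio).2 hIio
  refine ⟨hIic, ?_⟩
  have h := hmp.setIntegral_preimage_emb hemb (fun x : ℝ => x ^ (1 - γ)) (Ioi (d - R))
  rw [hpre] at h
  rw [integral_Iic_eq_integral_Iio, h, integral_Ioi_rpow_of_lt (by linarith) hdR]
  have h1 : 1 - γ + 1 = 2 - γ := by ring
  rw [h1, div_eq_div_iff (by linarith) (by linarith)]
  ring

private lemma sq2_lower (p q : ℝ) : |p| ≤ Real.sqrt (p ^ 2 + q ^ 2) := by
  rw [← Real.sqrt_sq_eq_abs]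
  exact Real.sqrt_le_sqrt (by nlinarith [sq_nonneg q])

private lemma sq2_upper (p q : ℝ) : Real.sqrt (p ^ 2 + q ^ 2) ≤ |p| + |q| := by
  have h : Real.sqrt (p ^ 2 + q ^ 2) ≤ Real.sqrt ((|p| + |q|) ^ 2) := by
    apply Real.sqrt_le_sqrt
    nlinarith [sq_abs p, sq_abs q, mul_nonneg (abs_nonneg p) (abs_nonneg q)]
  rwa [Real.sqrt_sq (by positivity)] at h

private lemma sq2_lower' (p q : ℝ) : (|p| + |q|) / Real.sqrt 2 ≤ Real.sqrt (p ^ 2 + q ^ 2) := by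
  rw [div_le_iff₀ (Real.sqrt_pos.mpr two_pos)]
  rw [← Real.sqrt_mul (by positivity) 2]
  have h : |p| + |q| = Real.sqrt ((|p| + |q|) ^ 2) := (Real.sqrt_sq (by positivity)).symm
  rw [h]
  apply Real.sqrt_le_sqrt
  nlinarith [sq_nonneg (|p| - |q|), sq_abs p, sq_abs q]

private lemma euc_norm (w : EuclideanSpace ℝ (Fin 2)) :
    ‖w‖ = Real.sqrt ((w 0) ^ 2 + (w 1) ^ 2) := by
  rw [EuclideanSpace.norm_eq, Fin.sum_univ_two]
  simp [Real.norm_eq_abs, sq_abs]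

/-- for γ > 2 there is c_γ > 0 such that for all n ≥ 1 and all x with
‖x‖ > √n (Euclidean norm), ∫_{B(0,√n)} (1+‖y−x‖₁)^{−γ} dy ≤ c_γ (1+‖x‖−√n)^{2−γ}. -/
theorem stmt14 (γ : ℝ) (hγ : 2 < γ) :
    ∃ c : ℝ, 0 < c ∧ ∀ n : ℕ, 1 ≤ n → ∀ x : EuclideanSpace ℝ (Fin 2),
      Real.sqrt n < ‖x‖ →
      (∫ y in Metric.ball (0 : EuclideanSpace ℝ (Fin 2)) (Real.sqrt n),
          (1 + ∑ i, |y i - x i|) ^ (-γ))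
        ≤ c * (1 + ‖x‖ - Real.sqrt n) ^ (2 - γ) := by
  have hγ1 : (1:ℝ) < γ := by linarith
  set K : ℝ := Real.sqrt 2 ^ γ with hK
  have hK0 : 0 < K := Real.rpow_pos_of_pos (by positivity) _
  have hden : (0:ℝ) < (γ - 1) * (γ - 2) := mul_pos (by linarith) (by linarith)
  refine ⟨K * (2 / ((γ - 1) * (γ - 2))), by positivity, ?_⟩
  intro n hn x hx
  set R := Real.sqrt (n : ℝ) with hRdef
  set a := ‖x‖ with hadef
  have hR0 : (0:ℝ) ≤ R := Real.sqrt_nonneg _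
  have hRa : R < a := hx
  have ha0 : 0 < a := lt_of_le_of_lt hR0 hRa
  have hc0 : (0:ℝ) < 1 + a - R := by linarith
  -- orthonormal basis with first vector in direction x
  obtain ⟨b, hb⟩ : ∃ b : OrthonormalBasis (Fin 2) ℝ (EuclideanSpace ℝ (Fin 2)),
      b 0 = a⁻¹ • x := by
    have hnorm : ‖a⁻¹ • x‖ = 1 := by
      rw [norm_smul, norm_inv, Real.norm_eq_abs, abs_of_pos ha0, ← hadef]
      field_simp
    have horth : Orthonormal ℝ (({0} : Set (Fin 2)).restrict fun _ : Fin 2 => a⁻¹ • x) := by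
      constructor
      · intro i; exact hnorm
      · intro i j hij
        exact absurd (Subtype.ext (by
          have hi := i.2; have hj := j.2
          simp only [Set.mem_singleton_iff] at hi hj
          rw [hi, hj])) hij
    obtain ⟨b, hb⟩ := horth.exists_orthonormalBasis_extension_of_card_eq
      (by simp)
    exact ⟨b, hb 0 rfl⟩
  have hrx0 : b.repr x 0 = a := by
    have hxe : x = a • b 0 := by
      rw [hb, smul_smul, mul_inv_cancel₀ (ne_of_gt ha0), one_smul]
    rw [hxe, _root_.map_smul, b.repr_self]
    simp [EuclideanSpace.single_apply]
  have hrx1 : b.repr x 1 = 0 := by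
    have hxe : x = a • b 0 := by
      rw [hb, smul_smul, mul_inv_cancel₀ (ne_of_gt ha0), one_smul]
    rw [hxe, _root_.map_smul, b.repr_self]
    simp [EuclideanSpace.single_apply]
  -- the rotation map
  set T : EuclideanSpace ℝ (Fin 2) → ℝ × ℝ := fun y => (b.repr y 0, b.repr y 1) with hT
  have hTeq : T = (MeasurableEquiv.finTwoArrow : (Fin 2 → ℝ) ≃ᵐ ℝ × ℝ) ∘
      ((MeasurableEquiv.toLp 2 (Fin 2 → ℝ)).symm) ∘ b.measurableEquiv := rfl
  have hTmp : MeasurePreserving T volume volume := by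
    rw [hTeq]
    exact (volume_preserving_finTwoArrow ℝ).comp
      ((EuclideanSpace.volume_preserving_symm_measurableEquiv_toLp (Fin 2)).comp
        b.measurePreserving_measurableEquiv)
  have hTemb : MeasurableEmbedding T := by
    rw [hTeq]
    exact (MeasurableEquiv.finTwoArrow.measurableEmbedding).comp
      ((MeasurableEquiv.toLp 2 (Fin 2 → ℝ)).symm.measurableEmbedding.comp
        b.measurableEquiv.measurableEmbedding)
  -- the comparison function
  set φ : ℝ × ℝ → ℝ := fun p => (max (1 + a - p.1) (1 + a - R) + |p.2|) ^ (-γ) with hφ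
  have hφpos : ∀ p : ℝ × ℝ, 0 < max (1 + a - p.1) (1 + a - R) + |p.2| := fun p => by
    have h1 : (1 + a - R) ≤ max (1 + a - p.1) (1 + a - R) := le_max_right _ _
    have := abs_nonneg p.2
    linarith
  have hφc : Continuous φ := by
    apply Continuous.rpow_const
    · exact ((continuous_const.sub continuous_fst).max continuous_const).add
        continuous_snd.abs
    · exact fun p => Or.inl (ne_of_gt (hφpos p))
  have hφm : Measurable fun p : ℝ × ℝ => ENNReal.ofReal (φ p) :=
    ENNReal.measurable_ofReal.comp hφc.measurable
  -- pointwise bound on the ball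
  have key : ∀ y ∈ Metric.ball (0 : EuclideanSpace ℝ (Fin 2)) R,
      (1 + ∑ i, |y i - x i|) ^ (-γ) ≤ K * φ (T y) := by
    intro y hy
    have hy' : ‖y‖ < R := by simpa using hy
    have hs_le : |b.repr y 0| ≤ ‖y‖ := by
      have h1 : |b.repr y 0| ≤ ‖b.repr y‖ := by
        rw [euc_norm (b.repr y)]; exact sq2_lower _ _
      rwa [b.repr.norm_map y] at h1
    have hsR : b.repr y 0 < R := lt_of_le_of_lt (le_trans (le_abs_self _) hs_le) hy'
    set s := b.repr y 0 with hsdef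
    set t := b.repr y 1 with htdef
    have hsum_ge : ‖y - x‖ ≤ ∑ i, |y i - x i| := by
      rw [euc_norm (y - x), Fin.sum_univ_two]
      have h0 : (y - x) 0 = y 0 - x 0 := rfl
      have h1 : (y - x) 1 = y 1 - x 1 := rfl
      rw [h0, h1]
      exact sq2_upper _ _
    have hnorm_ge : (|s - a| + |t|) / Real.sqrt 2 ≤ ‖y - x‖ := by
      have h1 : b.repr (y - x) 0 = s - a := by rw [map_sub]; simp [hrx0, hsdef]
      have h2 : b.repr (y - x) 1 = t - 0 := by rw [map_sub]; simp [hrx1, htdef]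
      have h3 : ‖y - x‖ = Real.sqrt ((s - a) ^ 2 + t ^ 2) := by
        rw [← b.repr.norm_map (y - x), euc_norm (b.repr (y - x)), h1, h2, sub_zero]
      rw [h3]
      exact sq2_lower' _ _
    have habs : |s - a| = a - s := by rw [abs_of_neg (by linarith : s - a < 0), neg_sub]
    have hs2 : (1:ℝ) ≤ Real.sqrt 2 := by
      rw [show (1:ℝ) = Real.sqrt 1 from (Real.sqrt_one).symm]
      exact Real.sqrt_le_sqrt one_le_two
    have hs2p : (0:ℝ) < Real.sqrt 2 := by positivity
    have hXnn : 0 ≤ a - s + |t| := by have := abs_nonneg t; linarith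
    have hchain : (1 + a - s + |t|) / Real.sqrt 2 ≤ 1 + ∑ i, |y i - x i| := by
      have hsplit : (1 + a - s + |t|) / Real.sqrt 2
          = 1 / Real.sqrt 2 + (a - s + |t|) / Real.sqrt 2 := by ring
      have h1r : 1 / Real.sqrt 2 ≤ 1 := by rw [div_le_one hs2p]; exact hs2
      have h2 : (a - s + |t|) / Real.sqrt 2 ≤ ‖y - x‖ := by rw [← habs]; exact hnorm_ge
      linarith
    have hupos : (0:ℝ) < 1 + a - s + |t| := by have := abs_nonneg t; linarith
    have hbpos : (0:ℝ) < (1 + a - s + |t|) / Real.sqrt 2 := div_pos hupos hs2p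
    have hmono := Real.rpow_le_rpow_of_nonpos hbpos hchain (by linarith : -γ ≤ 0)
    have hdiv : ((1 + a - s + |t|) / Real.sqrt 2) ^ (-γ) = K * (1 + a - s + |t|) ^ (-γ) := by
      rw [Real.div_rpow (le_of_lt hupos) (Real.sqrt_nonneg 2),
        Real.rpow_neg (Real.sqrt_nonneg 2), div_eq_mul_inv, inv_inv, hK]
      ring
    have hφval : φ (T y) = (1 + a - s + |t|) ^ (-γ) := by
      have hTy : T y = (s, t) := rfl
      rw [hTy]
      simp only [hφ]
      rw [max_eq_left (by linarith : (1 + a - R) ≤ 1 + a - s)]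
    rw [hφval, ← hdiv]
    exact hmono
  -- nonnegativity and measurability of the integrand
  have hbase_pos : ∀ y : EuclideanSpace ℝ (Fin 2), (0:ℝ) < 1 + ∑ i, |y i - x i| := by
    intro y
    have : (0:ℝ) ≤ ∑ i, |y i - x i| := Finset.sum_nonneg fun i _ => abs_nonneg _
    linarith
  have hfc : Continuous fun y : EuclideanSpace ℝ (Fin 2) => (1 + ∑ i, |y i - x i|) ^ (-γ) := by
    apply Continuous.rpow_const
    · exact continuous_const.add (continuous_finset_sum _ fun i _ =>
        ((EuclideanSpace.proj i).continuous.sub continuous_const).abs)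
    · exact fun y => Or.inl (ne_of_gt (hbase_pos y))
  -- the main lintegral estimate
  have hcl : ∀ l ∈ Iic R, (0:ℝ) < 1 + a - l := fun l hl => by
    simp only [mem_Iic] at hl; linarith
  have hlin : (∫⁻ y in Metric.ball (0 : EuclideanSpace ℝ (Fin 2)) R,
      ENNReal.ofReal ((1 + ∑ i, |y i - x i|) ^ (-γ)))
      ≤ ENNReal.ofReal (K * (2 / ((γ - 1) * (γ - 2))) * (1 + a - R) ^ (2 - γ)) := by
    have step1 : (∫⁻ y in Metric.ball (0 : EuclideanSpace ℝ (Fin 2)) R,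
        ENNReal.ofReal ((1 + ∑ i, |y i - x i|) ^ (-γ)))
        ≤ ∫⁻ y in Metric.ball (0 : EuclideanSpace ℝ (Fin 2)) R,
          ENNReal.ofReal K * ENNReal.ofReal (φ (T y)) := by
      apply setLIntegral_mono
      · exact (measurable_const.mul (hφm.comp hTmp.measurable))
      · intro y hy
        rw [← ENNReal.ofReal_mul hK0.le]
        exact ENNReal.ofReal_le_ofReal (key y hy)
    have step2 : (∫⁻ y in Metric.ball (0 : EuclideanSpace ℝ (Fin 2)) R,
        ENNReal.ofReal K * ENNReal.ofReal (φ (T y)))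
        ≤ ∫⁻ y in T ⁻¹' {p : ℝ × ℝ | p.1 ≤ R},
          ENNReal.ofReal K * ENNReal.ofReal (φ (T y)) := by
      apply lintegral_mono_set
      intro y hy
      have hy' : ‖y‖ < R := by simpa using hy
      have hs_le : |b.repr y 0| ≤ ‖y‖ := by
        have h1 : |b.repr y 0| ≤ ‖b.repr y‖ := by
          rw [euc_norm (b.repr y)]; exact sq2_lower _ _
        rwa [b.repr.norm_map y] at h1
      have : b.repr y 0 ≤ R := le_of_lt
        (lt_of_le_of_lt (le_trans (le_abs_self _) hs_le) hy')
      exact this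
    have step3 : (∫⁻ y in T ⁻¹' {p : ℝ × ℝ | p.1 ≤ R},
        ENNReal.ofReal K * ENNReal.ofReal (φ (T y)))
        = ENNReal.ofReal K * ∫⁻ p in {p : ℝ × ℝ | p.1 ≤ R}, ENNReal.ofReal (φ p) := by
      rw [lintegral_const_mul _ (show Measurable fun y : EuclideanSpace ℝ (Fin 2) => ENNReal.ofReal (φ (T y)) from hφm.comp hTmp.measurable)]
      congr 1
      exact hTmp.setLIntegral_comp_preimage_emb hTemb (fun p => ENNReal.ofReal (φ p)) {p : ℝ × ℝ | p.1 ≤ R}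
    have hsetprod : {p : ℝ × ℝ | p.1 ≤ R} = Iic R ×ˢ (univ : Set ℝ) := by
      ext p; simp [Set.mem_prod]
    have step4 : (∫⁻ p in {p : ℝ × ℝ | p.1 ≤ R}, ENNReal.ofReal (φ p))
        = ∫⁻ l in Iic R, (∫⁻ t : ℝ, ENNReal.ofReal (φ (l, t))) := by
      rw [hsetprod, Measure.volume_eq_prod, ← Measure.prod_restrict, Measure.restrict_univ]
      rw [lintegral_prod _ hφm.aemeasurable]
    have step5 : (∫⁻ l in Iic R, (∫⁻ t : ℝ, ENNReal.ofReal (φ (l, t))))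
        = ∫⁻ l in Iic R, ENNReal.ofReal (2 / (γ - 1) * (1 + a - l) ^ (1 - γ)) := by
      apply setLIntegral_congr_fun measurableSet_Iic
      intro l hl
      beta_reduce
      have hcl' : (0:ℝ) < 1 + a - l := hcl l hl
      have hmaxpt : ∀ t : ℝ, φ (l, t) = ((1 + a - l) + |t|) ^ (-γ) := by
        intro t
        simp only [hφ]
        rw [max_eq_left (by simp only [mem_Iic] at hl; linarith)]
      rw [show (∫⁻ t : ℝ, ENNReal.ofReal (φ (l, t)))
            = ∫⁻ t : ℝ, ENNReal.ofReal (((1 + a - l) + |t|) ^ (-γ)) from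
          lintegral_congr fun t => by rw [hmaxpt t]]
      rw [← ofReal_integral_eq_lintegral_ofReal (lemA hγ1 hcl').1
          (ae_of_all _ fun t => Real.rpow_nonneg (by positivity) _),
        (lemA hγ1 hcl').2]
    have step6 : (∫⁻ l in Iic R, ENNReal.ofReal (2 / (γ - 1) * (1 + a - l) ^ (1 - γ)))
        = ENNReal.ofReal (2 / (γ - 1) * ((1 + a - R) ^ (2 - γ) / (γ - 2))) := by
      have hB := lemB hγ (d := 1 + a) (R := R) hc0
      have hint : Integrable (fun l : ℝ => 2 / (γ - 1) * (1 + a - l) ^ (1 - γ))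
          (volume.restrict (Iic R)) := hB.1.const_mul _
      rw [← ofReal_integral_eq_lintegral_ofReal hint ?_]
      · rw [integral_const_mul, hB.2]
      · rw [Filter.EventuallyLE, ae_restrict_iff' measurableSet_Iic]
        apply ae_of_all
        intro l hl
        have := hcl l hl
        have h1 : (0:ℝ) ≤ (1 + a - l) ^ (1 - γ) := Real.rpow_nonneg (by linarith) _
        have h2 : (0:ℝ) ≤ 2 / (γ - 1) := div_nonneg (by norm_num) (by linarith)
        simp only [Pi.zero_apply]
        exact mul_nonneg h2 h1
    calc (∫⁻ y in Metric.ball (0 : EuclideanSpace ℝ (Fin 2)) R,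
        ENNReal.ofReal ((1 + ∑ i, |y i - x i|) ^ (-γ)))
        ≤ ENNReal.ofReal K * ∫⁻ p in {p : ℝ × ℝ | p.1 ≤ R}, ENNReal.ofReal (φ p) :=
          le_trans (le_trans step1 step2) (le_of_eq step3)
      _ = ENNReal.ofReal K *
          ENNReal.ofReal (2 / (γ - 1) * ((1 + a - R) ^ (2 - γ) / (γ - 2))) := by
          rw [step4, step5, step6]
      _ = ENNReal.ofReal (K * (2 / ((γ - 1) * (γ - 2))) * (1 + a - R) ^ (2 - γ)) := by
          rw [← ENNReal.ofReal_mul hK0.le]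
          congr 1
          have h1 : γ - 1 ≠ 0 := by linarith
          have h2 : γ - 2 ≠ 0 := by linarith
          field_simp
  -- conclude
  rw [integral_eq_lintegral_of_nonneg_ae
    (ae_of_all _ fun y => Real.rpow_nonneg (le_of_lt (hbase_pos y)) _)
    hfc.aestronglyMeasurable]
  refine ENNReal.toReal_le_of_le_ofReal ?_ hlin
  have h1 : (0:ℝ) ≤ (1 + a - R) ^ (2 - γ) := Real.rpow_nonneg hc0.le _
  have h2 : (0:ℝ) ≤ K * (2 / ((γ - 1) * (γ - 2))) := by positivity
  exact mul_nonneg h2 h1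
end

section
/- Let f : ℝ → ℝ be C¹ with {f ≥ u} compact for each u, and h a C¹ function with compact support. Then ∫_ℝ h(u) N_u⁺(f) du = ∫_ℝ h(f(x)) f'(x)⁺ dx and ∫_ℝ h(u) N_u⁻(f) du = ∫_ℝ h(f(x)) f'(x)⁻ dx, where N_u⁺(f), N_u⁻(f) are respectively the numbers of up-crossings and down-crossings of f at level u, defined for almost all u. -/
open Set MeasureTheory
open scoped ENNReal NNReal

/-- accumulation lemma: infinitely many solutions of `f x = u` in a compact superlevel set
force a critical point at level `u`. -/
lemma kacRice_acc (f : ℝ → ℝ) (hfc : Continuous f) (hgc : Continuous (deriv f))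
    (u : ℝ) (hK : IsCompact {x | u ≤ f x}) (A : Set ℝ) (hA : A ⊆ {x | f x = u})
    (hAinf : A.Infinite) : ∃ x, f x = u ∧ deriv f x = 0 := by
  set g := deriv f with hg_def
  let e : ℕ ↪ ℝ := (hAinf.natEmbedding A).trans (Function.Embedding.subtype _)
  have heA : ∀ n, (e n) ∈ A := fun n => ((hAinf.natEmbedding A) n).2
  have heu : ∀ n, f (e n) = u := fun n => hA (heA n)
  have heK : ∀ n, e n ∈ {x | u ≤ f x} := fun n => le_of_eq (heu n).symm
  obtain ⟨a, ha, φ, hφ, hlim⟩ := hK.tendsto_subseq heK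
  have hfa : f a = u := by
    have h1 : Filter.Tendsto (f ∘ (⇑e ∘ φ)) Filter.atTop (nhds (f a)) :=
      (hfc.tendsto a).comp hlim
    have h2 : f ∘ (⇑e ∘ φ) = fun _ => u := funext (fun n => heu (φ n))
    rw [h2] at h1
    exact (tendsto_nhds_unique tendsto_const_nhds h1).symm
  refine ⟨a, hfa, ?_⟩
  by_contra hga
  have hball : ∃ ε > 0, InjOn f (Metric.ball a ε) := by
    rcases lt_or_gt_of_ne hga with hneg | hpos
    · obtain ⟨ε, hε, hb⟩ := Metric.isOpen_iff.1 (isOpen_lt hgc continuous_const) a hneg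
      exact ⟨ε, hε, (strictAntiOn_of_deriv_neg (convex_ball a ε) hfc.continuousOn
        (fun x hx => hb (by rwa [Metric.isOpen_ball.interior_eq] at hx))).injOn⟩
    · obtain ⟨ε, hε, hb⟩ := Metric.isOpen_iff.1 (isOpen_lt continuous_const hgc) a hpos
      exact ⟨ε, hε, (strictMonoOn_of_deriv_pos (convex_ball a ε) hfc.continuousOn
        (fun x hx => hb (by rwa [Metric.isOpen_ball.interior_eq] at hx))).injOn⟩
  obtain ⟨ε, hε, hinj⟩ := hball
  obtain ⟨N, hN⟩ := Filter.eventually_atTop.1 (hlim.eventually (Metric.ball_mem_nhds a hε))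
  have h12 : e (φ N) = e (φ (N + 1)) :=
    hinj (hN N le_rfl) (hN (N + 1) (by omega)) ((heu (φ N)).trans (heu (φ (N + 1))).symm)
  have := hφ (by omega : N < N + 1)
  exact absurd (e.injective h12) (by omega : φ N ≠ φ (N + 1))
  

theorem kacRice_key (f h : ℝ → ℝ) (hf : ContDiff ℝ 1 f)
    (hcpt : ∀ u : ℝ, IsCompact {x | u ≤ f x})
    (hh : Continuous h) (hhsupp : HasCompactSupport h) :
    (∫ u : ℝ, h u * ({x | f x = u ∧ 0 < deriv f x}.ncard : ℝ))
      = ∫ x : ℝ, h (f x) * max (deriv f x) 0 := by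
  set g := deriv f with hg_def
  have hgc : Continuous g := hf.continuous_deriv le_rfl
  have hfc : Continuous f := hf.continuous
  have hfd : ∀ x, HasDerivAt f (g x) x := fun x =>
    ((hf.differentiable one_ne_zero) x).hasDerivAt
  set U : Set ℝ := {x | 0 < g x} with hU_def
  have hUopen : IsOpen U := isOpen_lt continuous_const hgc
  set ι := {s : Set ℝ // ∃ x ∈ U, connectedComponentIn U x = s} with hι_def
  have hsubU : ∀ s : ι, (s : Set ℝ) ⊆ U := by
    rintro ⟨s, x, hx, rfl⟩; exact connectedComponentIn_subset U x
  have hopen : ∀ s : ι, IsOpen (s : Set ℝ) := by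
    rintro ⟨s, x, hx, rfl⟩; exact hUopen.connectedComponentIn
  have hne : ∀ s : ι, (s : Set ℝ).Nonempty := by
    rintro ⟨s, x, hx, rfl⟩; exact ⟨x, mem_connectedComponentIn hx⟩
  have hconv : ∀ s : ι, Convex ℝ (s : Set ℝ) := by
    rintro ⟨s, x, hx, rfl⟩
    exact convex_iff_ordConnected.2 isPreconnected_connectedComponentIn.ordConnected
  have hdisj : Pairwise (Function.onFun Disjoint (fun s : ι => (s : Set ℝ))) := by
    rintro ⟨s, xs, hxs, rfl⟩ ⟨t, xt, hxt, rfl⟩ hst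
    by_contra hd
    obtain ⟨y, hy1, hy2⟩ := Set.not_disjoint_iff.1 hd
    exact hst (Subtype.ext ((connectedComponentIn_eq hy1).trans (connectedComponentIn_eq hy2).symm))
  haveI : Countable ι := hdisj.countable_of_isOpen_disjoint hopen hne
  have hUnion : ⋃ s : ι, (s : Set ℝ) = U := by
    apply subset_antisymm (iUnion_subset hsubU)
    intro x hx
    exact mem_iUnion.2 ⟨⟨connectedComponentIn U x, x, hx, rfl⟩, mem_connectedComponentIn hx⟩
  have hmono : ∀ s : ι, StrictMonoOn f (s : Set ℝ) := fun s =>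
    strictMonoOn_of_deriv_pos (hconv s) hfc.continuousOn
      (fun x hx => by rw [(hopen s).interior_eq] at hx; exact hsubU s hx)
  have hinj : ∀ s : ι, InjOn f (s : Set ℝ) := fun s => (hmono s).injOn
  have himg : ∀ s : ι, IsOpen (f '' (s : Set ℝ)) := by
    intro s
    rw [isOpen_iff_mem_nhds]
    rintro y ⟨x, hx, rfl⟩
    obtain ⟨ε, hε, hball⟩ := Metric.isOpen_iff.1 (hopen s) x hx
    have h1 : x - ε/2 ∈ (s : Set ℝ) := hball (by
      rw [Metric.mem_ball, Real.dist_eq, show x - ε/2 - x = -(ε/2) by ring, abs_neg,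
        abs_of_nonneg (by linarith)]; linarith)
    have h2 : x + ε/2 ∈ (s : Set ℝ) := hball (by
      rw [Metric.mem_ball, Real.dist_eq, add_sub_cancel_left, abs_of_nonneg (by linarith)]; linarith)
    have hordc : (f '' (s : Set ℝ)).OrdConnected :=
      (((hconv s).isPreconnected).image f hfc.continuousOn).ordConnected
    exact Filter.mem_of_superset
      (Ioo_mem_nhds (hmono s h1 hx (by linarith)) (hmono s hx h2 (by linarith)))
      (fun z hz => hordc.out (mem_image_of_mem f h1) (mem_image_of_mem f h2)
        (Ioo_subset_Icc_self hz))
  -- compact support helper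
  have hcomp : ∀ φ : ℝ → ℝ, (∀ x, h (f x) = 0 → φ x = 0) → HasCompactSupport φ := by
    intro φ hφ
    have hsub : Function.support φ ⊆ f ⁻¹' (tsupport h) := by
      intro x hx
      by_contra hc
      exact hx (hφ x (image_eq_zero_of_notMem_tsupport hc))
    rcases eq_empty_or_nonempty (tsupport h) with hK | hK
    · have h0 : Function.support φ = ∅ := by
        rw [hK] at hsub; simpa using hsub
      rw [HasCompactSupport, tsupport, h0, closure_empty]; exact isCompact_empty
    · obtain ⟨a, ha⟩ := hhsupp.exists_isLeast hK
      refine (hcpt a).of_isClosed_subset (isClosed_tsupport φ) (closure_minimal ?_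
        (isClosed_le continuous_const hfc))
      exact fun x hx => ha.2 (hsub hx)
  -- RHS chain
  have hRc : Continuous (fun x => h (f x) * max (g x) 0) :=
    (hh.comp hfc).mul (hgc.max continuous_const)
  have hRsupp : HasCompactSupport (fun x => h (f x) * max (g x) 0) :=
    hcomp _ (fun x hx => by rw [hx, zero_mul])
  have hRint : Integrable (fun x => h (f x) * max (g x) 0) :=
    hRc.integrable_of_hasCompactSupport hRsupp
  have e1 : (∫ x, h (f x) * max (g x) 0) = ∫ x in U, h (f x) * g x := by
    rw [← integral_indicator hUopen.measurableSet]
    congr 1; funext x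
    by_cases hx : x ∈ U
    · rw [indicator_of_mem hx, max_eq_left (le_of_lt hx)]
    · rw [indicator_of_notMem hx, max_eq_right (not_lt.1 hx), mul_zero]
  have hIntOn : IntegrableOn (fun x => h (f x) * g x) U := by
    refine (hRint.integrableOn).congr_fun (fun x hx => ?_) hUopen.measurableSet
    show h (f x) * max (g x) 0 = h (f x) * g x
    rw [max_eq_left (le_of_lt (show 0 < g x from hx))]
  have e2 : ∫ x in U, h (f x) * g x = ∑' s : ι, ∫ x in (s : Set ℝ), h (f x) * g x := by
    rw [← hUnion] at hIntOn
    have h2 := integral_iUnion (fun s : ι => (hopen s).measurableSet) hdisj hIntOn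
    rw [hUnion] at h2
    exact h2
  have e3 : ∀ s : ι, ∫ x in (s : Set ℝ), h (f x) * g x = ∫ u in f '' (s : Set ℝ), h u := by
    intro s
    rw [integral_image_eq_integral_abs_deriv_smul (hopen s).measurableSet
      (fun x _ => (hfd x).hasDerivWithinAt) (hinj s) h]
    refine setIntegral_congr_fun (hopen s).measurableSet (fun x hx => ?_)
    rw [smul_eq_mul, abs_of_pos (hsubU s hx), mul_comm]
  -- Sard
  have hZ : volume (f '' {x | g x = 0}) = 0 := by
    refine addHaar_image_eq_zero_of_det_fderivWithin_eq_zero volume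
      (f' := fun x => ContinuousLinearMap.smulRight (1 : ℝ →L[ℝ] ℝ) (g x))
      (fun x _ => (hasDerivAt_iff_hasFDerivAt.1 (hfd x)).hasFDerivWithinAt) (fun x hx => ?_)
    simp only [ContinuousLinearMap.det_smulRight, ContinuousLinearMap.one_apply, one_mul]
    exact hx
  -- counting claim
  have claim1 : ∀ u : ℝ, u ∉ f '' {x | g x = 0} →
      h u * (({x | f x = u ∧ 0 < g x}).ncard : ℝ)
        = ∑' s : ι, Set.indicator (f '' (s : Set ℝ)) h u := by
    intro u hu
    set A : Set ℝ := {x | f x = u ∧ 0 < g x} with hA_def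
    set S : Set ι := {s : ι | u ∈ f '' (s : Set ℝ)} with hS_def
    set Θ : ℝ → Set ℝ := fun x => connectedComponentIn U x with hΘ_def
    have himgΘ : Θ '' A = Subtype.val '' S := by
      apply subset_antisymm
      · rintro _ ⟨x, hx, rfl⟩
        exact ⟨⟨Θ x, x, hx.2, rfl⟩, ⟨x, mem_connectedComponentIn hx.2, hx.1⟩, rfl⟩
      · rintro _ ⟨⟨s, x₀, hx₀, rfl⟩, ⟨x, hxs, hfx⟩, rfl⟩
        have hxU : x ∈ U := connectedComponentIn_subset U x₀ hxs
        exact ⟨x, ⟨hfx, hxU⟩, (connectedComponentIn_eq hxs).symm⟩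
    have hΘinj : InjOn Θ A := by
      intro x hx y hy hxy
      have hyx : y ∈ Θ x := hxy ▸ mem_connectedComponentIn hy.2
      exact hinj ⟨Θ x, x, hx.2, rfl⟩ (mem_connectedComponentIn hx.2) hyx
        (hx.1.trans hy.1.symm)
    have hSfin : S.Finite := by
      by_contra hSinf
      have hAinf : A.Infinite := by
        intro hAfin
        have h1 : (Subtype.val '' S).Finite := himgΘ ▸ hAfin.image Θ
        exact hSinf ((h1.preimage Subtype.val_injective.injOn).subset
          (fun s hs => mem_preimage.2 (mem_image_of_mem _ hs)))
      obtain ⟨x₀, hx₀u, hx₀g⟩ := kacRice_acc f hfc hgc u (hcpt u) A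
        (fun x hx => hx.1) hAinf
      exact hu ⟨x₀, hx₀g, hx₀u⟩
    have hcard : A.ncard = S.ncard := by
      calc A.ncard = (Θ '' A).ncard := (ncard_image_of_injOn hΘinj).symm
        _ = (Subtype.val '' S).ncard := by rw [himgΘ]
        _ = S.ncard := ncard_image_of_injective _ Subtype.val_injective
    have hterm : ∀ s : ι, Set.indicator (f '' (s : Set ℝ)) h u
        = S.indicator (fun _ => h u) s := by
      intro s
      by_cases hs : u ∈ f '' (s : Set ℝ)
      · rw [indicator_of_mem hs]
        exact (indicator_of_mem (show s ∈ S from hs) (fun _ => h u)).symm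
      · rw [indicator_of_notMem hs]
        exact (indicator_of_notMem (show s ∉ S from hs) (fun _ => h u)).symm
    calc h u * (A.ncard : ℝ) = h u * (S.ncard : ℝ) := by rw [hcard]
      _ = ∑ s ∈ hSfin.toFinset, h u := by
          rw [Finset.sum_const, ncard_eq_toFinset_card _ hSfin, nsmul_eq_mul, mul_comm]
      _ = ∑' s : ι, S.indicator (fun _ => h u) s := by
          rw [tsum_eq_sum (s := hSfin.toFinset)
            (fun s hs => indicator_of_notMem (fun h' => hs (hSfin.mem_toFinset.2 h')) _)]
          exact Finset.sum_congr rfl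
            (fun s hs => (indicator_of_mem (hSfin.mem_toFinset.1 hs) (fun _ => h u)).symm)
      _ = ∑' s : ι, Set.indicator (f '' (s : Set ℝ)) h u :=
          tsum_congr (fun s => (hterm s).symm)
  -- tsum integrability
  have hfin : ∑' s : ι, ∫⁻ u, ‖Set.indicator (f '' (s : Set ℝ)) h u‖₊ ≠ ⊤ := by
    have hψc : Continuous (fun x => |g x| * |h (f x)|) := hgc.abs.mul (hh.comp hfc).abs
    have hψint : Integrable (fun x => |g x| * |h (f x)|) :=
      hψc.integrable_of_hasCompactSupport (hcomp _ (fun x hx => by rw [hx, abs_zero, mul_zero]))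
    have hcov : ∀ s : ι, (∫⁻ u, (‖Set.indicator (f '' (s : Set ℝ)) h u‖₊ : ℝ≥0∞))
        = ∫⁻ x in (s : Set ℝ), ENNReal.ofReal (|g x| * |h (f x)|) := by
      intro s
      have hli := lintegral_image_eq_lintegral_abs_det_fderiv_mul volume (hopen s).measurableSet
        (f' := fun x => ContinuousLinearMap.smulRight (1 : ℝ →L[ℝ] ℝ) (g x))
        (fun x _ => (hasDerivAt_iff_hasFDerivAt.1 (hfd x)).hasFDerivWithinAt) (hinj s)
        (fun u => (‖h u‖₊ : ℝ≥0∞))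
      simp only [ContinuousLinearMap.det_smulRight, ContinuousLinearMap.one_apply, one_mul] at hli
      have hind : ∀ u, (‖Set.indicator (f '' (s : Set ℝ)) h u‖₊ : ℝ≥0∞)
          = Set.indicator (f '' (s : Set ℝ)) (fun u => (‖h u‖₊ : ℝ≥0∞)) u := by
        intro u
        rw [nnnorm_indicator_eq_indicator_nnnorm]
        exact (ENNReal.coe_indicator _ _ _)
      calc (∫⁻ u, (‖Set.indicator (f '' (s : Set ℝ)) h u‖₊ : ℝ≥0∞))
          = ∫⁻ u, Set.indicator (f '' (s : Set ℝ)) (fun u => (‖h u‖₊ : ℝ≥0∞)) u :=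
            lintegral_congr (fun u => hind u)
        _ = ∫⁻ u in f '' (s : Set ℝ), (‖h u‖₊ : ℝ≥0∞) := by
            rw [lintegral_indicator (himg s).measurableSet]
        _ = ∫⁻ x in (s : Set ℝ), ENNReal.ofReal |g x| * ‖h (f x)‖₊ := hli
        _ = ∫⁻ x in (s : Set ℝ), ENNReal.ofReal (|g x| * |h (f x)|) := by
            refine lintegral_congr (fun x => ?_)
            rw [ENNReal.ofReal_mul (abs_nonneg _), ← enorm_eq_nnnorm, Real.enorm_eq_ofReal_abs]
    have hlt : (∑' s : ι, ∫⁻ u, (‖Set.indicator (f '' (s : Set ℝ)) h u‖₊ : ℝ≥0∞)) < ⊤ := by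
      calc (∑' s : ι, ∫⁻ u, (‖Set.indicator (f '' (s : Set ℝ)) h u‖₊ : ℝ≥0∞))
          = ∑' s : ι, ∫⁻ x in (s : Set ℝ), ENNReal.ofReal (|g x| * |h (f x)|) :=
            tsum_congr (fun s => hcov s)
        _ = ∫⁻ x in (⋃ s : ι, (s : Set ℝ)), ENNReal.ofReal (|g x| * |h (f x)|) :=
            (lintegral_iUnion (fun s : ι => (hopen s).measurableSet) hdisj _).symm
        _ ≤ ∫⁻ x, ENNReal.ofReal (|g x| * |h (f x)|) := setLIntegral_le_lintegral _ _
        _ < ⊤ := hψint.lintegral_lt_top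
    exact hlt.ne
  -- final chain
  have hae : ∀ᵐ u : ℝ, h u * (({x | f x = u ∧ 0 < g x}).ncard : ℝ)
      = ∑' s : ι, Set.indicator (f '' (s : Set ℝ)) h u :=
    (measure_eq_zero_iff_ae_notMem.1 hZ).mono claim1
  calc (∫ u : ℝ, h u * ({x | f x = u ∧ 0 < g x}.ncard : ℝ))
      = ∫ u : ℝ, ∑' s : ι, Set.indicator (f '' (s : Set ℝ)) h u := integral_congr_ae hae
    _ = ∑' s : ι, ∫ u : ℝ, Set.indicator (f '' (s : Set ℝ)) h u :=
        integral_tsum (fun s => hh.aestronglyMeasurable.indicator (himg s).measurableSet) hfin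
    _ = ∑' s : ι, ∫ u in f '' (s : Set ℝ), h u := by
        refine tsum_congr (fun s => ?_)
        rw [integral_indicator (himg s).measurableSet]
    _ = ∫ x, h (f x) * max (g x) 0 := by
        rw [e1, e2]
        exact tsum_congr (fun s => (e3 s).symm)

/-- one-dimensional Kac–Rice / co-area formula: for f C¹ with compact
excursion sets and h C¹ with compact support,
∫ h(u) N_u⁺(f) du = ∫ h(f(x)) f'(x)⁺ dx and ∫ h(u) N_u⁻(f) du = ∫ h(f(x)) f'(x)⁻ dx. -/
theorem stmt18 (f h : ℝ → ℝ) (hf : ContDiff ℝ 1 f)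
    (hcpt : ∀ u : ℝ, IsCompact {x | u ≤ f x})
    (hh : ContDiff ℝ 1 h) (hhsupp : HasCompactSupport h) :
    (∫ u : ℝ, h u * ({x | f x = u ∧ 0 < deriv f x}.ncard : ℝ))
      = (∫ x : ℝ, h (f x) * max (deriv f x) 0) ∧
    (∫ u : ℝ, h u * ({x | f x = u ∧ deriv f x < 0}.ncard : ℝ))
      = ∫ x : ℝ, h (f x) * max (-deriv f x) 0 := by
  constructor
  · exact kacRice_key f h hf hcpt hh.continuous hhsupp
  · set f₂ : ℝ → ℝ := fun x => f (-x) with hf₂_def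
    have hf₂c : ContDiff ℝ 1 f₂ := hf.comp contDiff_neg
    have hd : ∀ x : ℝ, HasDerivAt f₂ (deriv f (-x) * -1) x := fun x =>
      ((hf.differentiable one_ne_zero (-x)).hasDerivAt).comp x (hasDerivAt_neg x)
    have hderiv : ∀ x, deriv f₂ x = deriv f (-x) * -1 := fun x => (hd x).deriv
    have hcpt₂ : ∀ u : ℝ, IsCompact {x | u ≤ f₂ x} := by
      intro u
      have heq : {x | u ≤ f₂ x} = -{x | u ≤ f x} := by
        ext x; simp only [mem_setOf_eq, Set.mem_neg, hf₂_def]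
      rw [heq]; exact (hcpt u).neg
    have key := kacRice_key f₂ h hf₂c hcpt₂ hh.continuous hhsupp
    have hncard : ∀ u : ℝ, ({x | f₂ x = u ∧ 0 < deriv f₂ x}).ncard
        = ({x | f x = u ∧ deriv f x < 0}).ncard := by
      intro u
      have hsets : {x | f₂ x = u ∧ 0 < deriv f₂ x} = -{x | f x = u ∧ deriv f x < 0} := by
        ext x
        simp only [mem_setOf_eq, Set.mem_neg, hderiv]
        simp only [hf₂_def]
        constructor
        · rintro ⟨h1, h2⟩; exact ⟨h1, by linarith⟩
        · rintro ⟨h1, h2⟩; exact ⟨h1, by linarith⟩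
      rw [hsets, ← Set.image_neg_eq_neg]
      exact Set.ncard_image_of_injective _ neg_injective
    calc (∫ u : ℝ, h u * ({x | f x = u ∧ deriv f x < 0}.ncard : ℝ))
        = ∫ u : ℝ, h u * ({x | f₂ x = u ∧ 0 < deriv f₂ x}.ncard : ℝ) := by
          refine integral_congr_ae (Filter.Eventually.of_forall (fun u => ?_))
          show h u * (({x | f x = u ∧ deriv f x < 0}).ncard : ℝ)
            = h u * (({x | f₂ x = u ∧ 0 < deriv f₂ x}).ncard : ℝ)
          rw [hncard u]
      _ = ∫ x : ℝ, h (f₂ x) * max (deriv f₂ x) 0 := key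
      _ = ∫ x : ℝ, h (f (-x)) * max (-(deriv f (-x))) 0 := by
          refine integral_congr_ae (Filter.Eventually.of_forall (fun x => ?_))
          show h (f₂ x) * max (deriv f₂ x) 0 = h (f (-x)) * max (-(deriv f (-x))) 0
          rw [hderiv x, mul_neg_one]
      _ = ∫ x : ℝ, h (f x) * max (-(deriv f x)) 0 :=
          integral_neg_eq_self (fun x => h (f x) * max (-(deriv f x)) 0) volume
      _ = ∫ x : ℝ, h (f x) * max (-deriv f x) 0 := rfl
end

section
/- Let f be a stationary, isotropic C¹ random field on ℝ² such that conditionally on f(0), the law of ∇f(0) is invariant under rotations, and let h be bounded measurable. Then for i = 1, 2, E[h(f(0)) 1_{∇f(0) ∈ Q_i} (∂_i f(0))²] = ((π−2)/(16π)) E[h(f(0)) ‖∇f(0)‖²]. -/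
open MeasureTheory Real

private lemma aux_ne_ae (b : ℝ) : ∀ᵐ x : ℝ, x ≠ b := by
  rw [MeasureTheory.ae_iff]
  simpa using measure_singleton (α := ℝ) b

private lemma intInt_congr_Ioo {a b : ℝ} (hab : a ≤ b) {f g : ℝ → ℝ}
    (h : ∀ x ∈ Set.Ioo a b, f x = g x) :
    ∫ x in a..b, f x = ∫ x in a..b, g x := by
  rw [intervalIntegral.integral_of_le hab, intervalIntegral.integral_of_le hab]
  refine MeasureTheory.setIntegral_congr_ae measurableSet_Ioc ?_
  filter_upwards [aux_ne_ae b] with x hx hmem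
  exact h x ⟨hmem.1, lt_of_le_of_ne hmem.2 hx⟩

private lemma aux_bdd_II {f : ℝ → ℝ} (hm : Measurable f) (C : ℝ) (hb : ∀ x, |f x| ≤ C)
    (a b : ℝ) : IntervalIntegrable f volume a b := by
  rw [intervalIntegrable_iff]
  haveI : IsFiniteMeasure (volume.restrict (Set.uIoc a b)) :=
    ⟨by rw [Measure.restrict_apply_univ, Set.uIoc]; exact measure_Ioc_lt_top⟩
  exact (integrable_const C).mono' hm.aestronglyMeasurable
    (Filter.Eventually.of_forall fun x => by simpa using hb x)

private lemma sin_sub_cos_eq (ψ : ℝ) :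
    Real.sin ψ - Real.cos ψ = Real.sqrt 2 * Real.sin (ψ - π/4) := by
  have s2 : Real.sqrt 2 ^ 2 = 2 := Real.sq_sqrt (by norm_num)
  rw [Real.sin_sub, Real.cos_pi_div_four, Real.sin_pi_div_four]
  linear_combination (-(Real.sin ψ - Real.cos ψ)/2) * s2

private lemma psi1_meas : Measurable (fun ψ : ℝ =>
    (if Real.sin ψ < Real.cos ψ ∧ Real.cos ψ < 0 then (1:ℝ) else 0) * Real.cos ψ ^ 2) := by
  apply Measurable.mul
  · exact Measurable.ite
      (((measurableSet_lt (Real.continuous_sin.measurable) (Real.continuous_cos.measurable)).inter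
        (measurableSet_lt (Real.continuous_cos.measurable) measurable_const)))
      measurable_const measurable_const
  · exact (Real.continuous_cos.measurable).pow_const 2

private lemma psi1_bd (ψ : ℝ) :
    |(if Real.sin ψ < Real.cos ψ ∧ Real.cos ψ < 0 then (1:ℝ) else 0) * Real.cos ψ ^ 2| ≤ 1 := by
  have h1 := Real.neg_one_le_cos ψ
  have h2 := Real.cos_le_one ψ
  split_ifs with hh
  · rw [one_mul, abs_of_nonneg (sq_nonneg _)]; nlinarith
  · simp

private lemma sector1 :
    (∫ ψ in (0:ℝ)..(2*π),
      (if Real.sin ψ < Real.cos ψ ∧ Real.cos ψ < 0 then (1:ℝ) else 0) * Real.cos ψ ^ 2)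
      = (π - 2)/8 := by
  have hπ := Real.pi_pos
  have hs2 : Real.sqrt 2 ^ 2 = 2 := Real.sq_sqrt (by norm_num)
  have hs2p : (0:ℝ) < Real.sqrt 2 := Real.sqrt_pos.2 (by norm_num)
  set f : ℝ → ℝ := fun ψ =>
    (if Real.sin ψ < Real.cos ψ ∧ Real.cos ψ < 0 then (1:ℝ) else 0) * Real.cos ψ ^ 2 with hf
  have hII : ∀ a b : ℝ, IntervalIntegrable f volume a b :=
    aux_bdd_II psi1_meas 1 psi1_bd
  have h1 : ∫ ψ in (0:ℝ)..(5*π/4), f ψ = 0 := by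
    rw [intInt_congr_Ioo (by linarith) (g := fun _ => (0:ℝ))]
    · simp
    · intro ψ hψ
      have hne : ¬ (Real.sin ψ < Real.cos ψ ∧ Real.cos ψ < 0) := by
        rintro ⟨hsc, hc⟩
        rcases le_or_gt ψ (π/2) with hle | hgt
        · exact absurd (Real.cos_nonneg_of_mem_Icc ⟨by linarith [hψ.1], hle⟩) (not_le.2 hc)
        · have hkey := sin_sub_cos_eq ψ
          have hsin : 0 ≤ Real.sin (ψ - π/4) :=
            Real.sin_nonneg_of_nonneg_of_le_pi (by linarith) (by linarith [hψ.2])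
          nlinarith
      simp [hf, hne]
  have h2 : ∫ ψ in (5*π/4:ℝ)..(3*π/2), f ψ = (π - 2)/8 := by
    rw [intInt_congr_Ioo (by linarith) (g := fun ψ => Real.cos ψ ^ 2)]
    · rw [integral_cos_sq]
      have e1 : (3:ℝ)*π/2 = π + π/2 := by ring
      have e2 : (5:ℝ)*π/4 = π + π/4 := by ring
      rw [e1, e2]
      simp [Real.cos_add, Real.sin_add, Real.cos_pi_div_four, Real.sin_pi_div_four]
      nlinarith [hs2]
    · intro ψ hψ
      have hc : Real.cos ψ < 0 :=
        Real.cos_neg_of_pi_div_two_lt_of_lt (by linarith [hψ.1]) (by linarith [hψ.2])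
      have hsc : Real.sin ψ < Real.cos ψ := by
        have hkey := sin_sub_cos_eq ψ
        have : Real.sin (ψ - π/4) < 0 := by
          have h5 : Real.sin (ψ - π/4) = -Real.sin (ψ - π/4 - π) := by
            rw [Real.sin_sub_pi]; ring
          have : 0 < Real.sin (ψ - π/4 - π) :=
            Real.sin_pos_of_pos_of_lt_pi (by linarith [hψ.1]) (by linarith [hψ.2, hπ])
          linarith [h5, this]
        nlinarith
      simp [hf, hsc, hc]
  have h3 : ∫ ψ in (3*π/2:ℝ)..(2*π), f ψ = 0 := by
    rw [intInt_congr_Ioo (by linarith) (g := fun _ => (0:ℝ))]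
    · simp
    · intro ψ hψ
      have hc : 0 ≤ Real.cos ψ := by
        rw [← Real.cos_sub_two_pi]
        exact Real.cos_nonneg_of_mem_Icc ⟨by linarith [hψ.1], by linarith [hψ.2]⟩
      have hne : ¬ (Real.sin ψ < Real.cos ψ ∧ Real.cos ψ < 0) := by
        rintro ⟨_, hcc⟩; linarith
      simp [hf, hne]
  have hsum1 := intervalIntegral.integral_add_adjacent_intervals (μ := volume)
    (hII (5*π/4) (3*π/2)) (hII (3*π/2) (2*π))
  have hsum2 := intervalIntegral.integral_add_adjacent_intervals (μ := volume)
    (hII 0 (5*π/4)) (hII (5*π/4) (2*π))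
  rw [← hsum2, ← hsum1, h1, h2, h3]; ring

private lemma psi2_meas : Measurable (fun ψ : ℝ =>
    (if Real.cos ψ < Real.sin ψ ∧ Real.sin ψ < 0 then (1:ℝ) else 0) * Real.sin ψ ^ 2) := by
  apply Measurable.mul
  · exact Measurable.ite
      (((measurableSet_lt (Real.continuous_cos.measurable) (Real.continuous_sin.measurable)).inter
        (measurableSet_lt (Real.continuous_sin.measurable) measurable_const)))
      measurable_const measurable_const
  · exact (Real.continuous_sin.measurable).pow_const 2

private lemma psi2_bd (ψ : ℝ) :
    |(if Real.cos ψ < Real.sin ψ ∧ Real.sin ψ < 0 then (1:ℝ) else 0) * Real.sin ψ ^ 2| ≤ 1 := by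
  have h1 := Real.neg_one_le_sin ψ
  have h2 := Real.sin_le_one ψ
  split_ifs with hh
  · rw [one_mul, abs_of_nonneg (sq_nonneg _)]; nlinarith
  · simp

private lemma sector2 :
    (∫ ψ in (0:ℝ)..(2*π),
      (if Real.cos ψ < Real.sin ψ ∧ Real.sin ψ < 0 then (1:ℝ) else 0) * Real.sin ψ ^ 2)
      = (π - 2)/8 := by
  have hπ := Real.pi_pos
  have hs2 : Real.sqrt 2 ^ 2 = 2 := Real.sq_sqrt (by norm_num)
  have hs2p : (0:ℝ) < Real.sqrt 2 := Real.sqrt_pos.2 (by norm_num)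
  set f : ℝ → ℝ := fun ψ =>
    (if Real.cos ψ < Real.sin ψ ∧ Real.sin ψ < 0 then (1:ℝ) else 0) * Real.sin ψ ^ 2 with hf
  have hII : ∀ a b : ℝ, IntervalIntegrable f volume a b :=
    aux_bdd_II psi2_meas 1 psi2_bd
  have h1 : ∫ ψ in (0:ℝ)..(π), f ψ = 0 := by
    rw [intInt_congr_Ioo (by linarith) (g := fun _ => (0:ℝ))]
    · simp
    · intro ψ hψ
      have hs : 0 ≤ Real.sin ψ :=
        Real.sin_nonneg_of_nonneg_of_le_pi (le_of_lt hψ.1) (le_of_lt hψ.2)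
      have hne : ¬ (Real.cos ψ < Real.sin ψ ∧ Real.sin ψ < 0) := by
        rintro ⟨_, hss⟩; linarith
      simp [hf, hne]
  have h2 : ∫ ψ in (π:ℝ)..(5*π/4), f ψ = (π - 2)/8 := by
    rw [intInt_congr_Ioo (by linarith) (g := fun ψ => Real.sin ψ ^ 2)]
    · rw [integral_sin_sq]
      have e2 : (5:ℝ)*π/4 = π + π/4 := by ring
      rw [e2]
      simp [Real.cos_add, Real.sin_add, Real.cos_pi_div_four, Real.sin_pi_div_four]
      nlinarith [hs2]
    · intro ψ hψ
      have hs : Real.sin ψ < 0 := by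
        have h5 : Real.sin ψ = -Real.sin (ψ - π) := by rw [Real.sin_sub_pi]; ring
        have : 0 < Real.sin (ψ - π) :=
          Real.sin_pos_of_pos_of_lt_pi (by linarith [hψ.1]) (by linarith [hψ.2, hπ])
        linarith [h5, this]
      have hcs : Real.cos ψ < Real.sin ψ := by
        have hkey := sin_sub_cos_eq ψ
        have : 0 < Real.sin (ψ - π/4) :=
          Real.sin_pos_of_pos_of_lt_pi (by linarith [hψ.1]) (by linarith [hψ.2])
        nlinarith
      simp [hf, hcs, hs]
  have h3 : ∫ ψ in (5*π/4:ℝ)..(2*π), f ψ = 0 := by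
    rw [intInt_congr_Ioo (by linarith) (g := fun _ => (0:ℝ))]
    · simp
    · intro ψ hψ
      have hne : ¬ (Real.cos ψ < Real.sin ψ ∧ Real.sin ψ < 0) := by
        rintro ⟨hcs, hss⟩
        have hkey := sin_sub_cos_eq ψ
        have hpos : 0 < Real.sin (ψ - π/4) := by nlinarith
        have h5 : Real.sin (ψ - π/4) = -Real.sin (ψ - π/4 - π) := by
          rw [Real.sin_sub_pi]; ring
        have : 0 ≤ Real.sin (ψ - π/4 - π) :=
          Real.sin_nonneg_of_nonneg_of_le_pi (by linarith [hψ.1]) (by linarith [hψ.2])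
        linarith
      simp [hf, hne]
  have hsum1 := intervalIntegral.integral_add_adjacent_intervals (μ := volume)
    (hII π (5*π/4)) (hII (5*π/4) (2*π))
  have hsum2 := intervalIntegral.integral_add_adjacent_intervals (μ := volume)
    (hII 0 π) (hII π (2*π))
  rw [← hsum2, ← hsum1, h1, h2, h3]; ring

private lemma polar (v : ℝ × ℝ) (hv : v ≠ 0) :
    ∃ r α : ℝ, 0 < r ∧ r ^ 2 = v.1 ^ 2 + v.2 ^ 2 ∧
      ∀ θ : ℝ, Real.cos θ * v.1 - Real.sin θ * v.2 = r * Real.cos (θ + α) ∧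
           Real.sin θ * v.1 + Real.cos θ * v.2 = r * Real.sin (θ + α) := by
  have hne : v.1 ≠ 0 ∨ v.2 ≠ 0 := by
    by_contra hc; push_neg at hc
    exact hv (by rw [Prod.ext_iff]; simp [hc.1, hc.2])
  have hpos : 0 < v.1 ^ 2 + v.2 ^ 2 := by
    rcases hne with h | h
    · have : 0 < v.1 ^ 2 := by positivity
      nlinarith [sq_nonneg v.2]
    · have : 0 < v.2 ^ 2 := by positivity
      nlinarith [sq_nonneg v.1]
  set r : ℝ := Real.sqrt (v.1 ^ 2 + v.2 ^ 2) with hrdef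
  have hr : 0 < r := Real.sqrt_pos.2 hpos
  have hr2 : r ^ 2 = v.1 ^ 2 + v.2 ^ 2 := Real.sq_sqrt hpos.le
  set z : ℂ := (v.1 : ℂ) + (v.2 : ℂ) * Complex.I with hzdef
  have hzre : z.re = v.1 := by simp [hzdef]
  have hzim : z.im = v.2 := by simp [hzdef]
  have hz : z ≠ 0 := by
    intro h0
    rcases hne with h | h
    · exact h (by rw [← hzre, h0]; simp)
    · exact h (by rw [← hzim, h0]; simp)
  have habs : ‖z‖ = r := by
    rw [Complex.norm_def, hzdef, Complex.normSq_add_mul_I]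
  have hcos : r * Real.cos z.arg = v.1 := by
    rw [Complex.cos_arg hz, habs, hzre]; field_simp
  have hsin : r * Real.sin z.arg = v.2 := by
    rw [Complex.sin_arg, habs, hzim]; field_simp
  refine ⟨r, z.arg, hr, hr2, fun θ => ⟨?_, ?_⟩⟩
  · rw [Real.cos_add]
    linear_combination (-Real.cos θ) * hcos + Real.sin θ * hsin
  · rw [Real.sin_add]
    linear_combination (-Real.sin θ) * hcos + (-Real.cos θ) * hsin

private lemma ang1 (v : ℝ × ℝ) :
    (∫ θ in (0:ℝ)..(2*π),
      (if Real.sin θ * v.1 + Real.cos θ * v.2 < Real.cos θ * v.1 - Real.sin θ * v.2 ∧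
          Real.cos θ * v.1 - Real.sin θ * v.2 < 0 then (1:ℝ) else 0)
        * (Real.cos θ * v.1 - Real.sin θ * v.2) ^ 2)
      = (π - 2)/8 * (v.1 ^ 2 + v.2 ^ 2) := by
  by_cases hv : v = 0
  · subst hv; simp
  obtain ⟨r, α, hr, hr2, hR⟩ := polar v hv
  set ψf : ℝ → ℝ := fun ψ =>
    (if Real.sin ψ < Real.cos ψ ∧ Real.cos ψ < 0 then (1:ℝ) else 0) * Real.cos ψ ^ 2 with hψf
  have hfun : (fun θ =>
      (if Real.sin θ * v.1 + Real.cos θ * v.2 < Real.cos θ * v.1 - Real.sin θ * v.2 ∧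
          Real.cos θ * v.1 - Real.sin θ * v.2 < 0 then (1:ℝ) else 0)
        * (Real.cos θ * v.1 - Real.sin θ * v.2) ^ 2)
      = fun θ => r ^ 2 * ψf (θ + α) := by
    funext θ
    rw [(hR θ).1, (hR θ).2, hψf]
    have hiff : (r * Real.sin (θ+α) < r * Real.cos (θ+α) ∧ r * Real.cos (θ+α) < 0) ↔
        (Real.sin (θ+α) < Real.cos (θ+α) ∧ Real.cos (θ+α) < 0) := by
      constructor
      · rintro ⟨h1, h2⟩
        refine ⟨lt_of_mul_lt_mul_left h1 hr.le, ?_⟩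
        by_contra hcon; push_neg at hcon
        exact absurd h2 (not_lt.2 (mul_nonneg hr.le hcon))
      · rintro ⟨h1, h2⟩
        exact ⟨by nlinarith, mul_neg_of_pos_of_neg hr h2⟩
    rw [if_congr hiff rfl rfl]; ring
  rw [hfun, intervalIntegral.integral_const_mul, intervalIntegral.integral_comp_add_right ψf α]
  have hper : Function.Periodic ψf (2*π) := by
    intro ψ; simp [hψf, Real.sin_add_two_pi, Real.cos_add_two_pi]
  rw [show (0:ℝ) + α = α by ring, show 2*π + α = α + 2*π by ring,
    hper.intervalIntegral_add_eq α 0, show (0:ℝ) + 2*π = 2*π by ring, hψf]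
  rw [sector1, hr2]; ring

private lemma ang2 (v : ℝ × ℝ) :
    (∫ θ in (0:ℝ)..(2*π),
      (if Real.cos θ * v.1 - Real.sin θ * v.2 < Real.sin θ * v.1 + Real.cos θ * v.2 ∧
          Real.sin θ * v.1 + Real.cos θ * v.2 < 0 then (1:ℝ) else 0)
        * (Real.sin θ * v.1 + Real.cos θ * v.2) ^ 2)
      = (π - 2)/8 * (v.1 ^ 2 + v.2 ^ 2) := by
  by_cases hv : v = 0
  · subst hv; simp
  obtain ⟨r, α, hr, hr2, hR⟩ := polar v hv
  set ψf : ℝ → ℝ := fun ψ =>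
    (if Real.cos ψ < Real.sin ψ ∧ Real.sin ψ < 0 then (1:ℝ) else 0) * Real.sin ψ ^ 2 with hψf
  have hfun : (fun θ =>
      (if Real.cos θ * v.1 - Real.sin θ * v.2 < Real.sin θ * v.1 + Real.cos θ * v.2 ∧
          Real.sin θ * v.1 + Real.cos θ * v.2 < 0 then (1:ℝ) else 0)
        * (Real.sin θ * v.1 + Real.cos θ * v.2) ^ 2)
      = fun θ => r ^ 2 * ψf (θ + α) := by
    funext θ
    rw [(hR θ).1, (hR θ).2, hψf]
    have hiff : (r * Real.cos (θ+α) < r * Real.sin (θ+α) ∧ r * Real.sin (θ+α) < 0) ↔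
        (Real.cos (θ+α) < Real.sin (θ+α) ∧ Real.sin (θ+α) < 0) := by
      constructor
      · rintro ⟨h1, h2⟩
        refine ⟨lt_of_mul_lt_mul_left h1 hr.le, ?_⟩
        by_contra hcon; push_neg at hcon
        exact absurd h2 (not_lt.2 (mul_nonneg hr.le hcon))
      · rintro ⟨h1, h2⟩
        exact ⟨by nlinarith, mul_neg_of_pos_of_neg hr h2⟩
    rw [if_congr hiff rfl rfl]; ring
  rw [hfun, intervalIntegral.integral_const_mul, intervalIntegral.integral_comp_add_right ψf α]
  have hper : Function.Periodic ψf (2*π) := by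
    intro ψ; simp [hψf, Real.sin_add_two_pi, Real.cos_add_two_pi]
  rw [show (0:ℝ) + α = α by ring, show 2*π + α = α + 2*π by ring,
    hper.intervalIntegral_add_eq α 0, show (0:ℝ) + 2*π = 2*π by ring, hψf]
  rw [sector2, hr2]; ring

private lemma key {Ω : Type*} [MeasureSpace Ω]
    [IsProbabilityMeasure (volume : Measure Ω)]
    (F : Ω → ℝ) (G : Ω → ℝ × ℝ)
    (hmeasF : Measurable F) (hmeasG : Measurable G)
    (hrot : ∀ θ : ℝ,
      Measure.map (fun ω => (F ω, (Real.cos θ * (G ω).1 - Real.sin θ * (G ω).2,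
                                   Real.sin θ * (G ω).1 + Real.cos θ * (G ω).2)))
          (volume : Measure Ω)
        = Measure.map (fun ω => (F ω, G ω)) (volume : Measure Ω))
    (h : ℝ → ℝ) (hmeas : Measurable h)
    (hint : Integrable (fun ω => |h (F ω)| * ((G ω).1 ^ 2 + (G ω).2 ^ 2)))
    (g : ℝ × ℝ → ℝ) (hgm : Measurable g) (hgb : ∀ v : ℝ × ℝ, |g v| ≤ v.1 ^ 2 + v.2 ^ 2)
    (hang : ∀ v : ℝ × ℝ,
      (∫ θ in (0:ℝ)..(2*π), g (Real.cos θ * v.1 - Real.sin θ * v.2,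
                               Real.sin θ * v.1 + Real.cos θ * v.2))
        = (π - 2) / 8 * (v.1 ^ 2 + v.2 ^ 2)) :
    ∫ ω, h (F ω) * g (G ω)
      = (π - 2) / (16 * π) * ∫ ω, h (F ω) * ((G ω).1 ^ 2 + (G ω).2 ^ 2) := by
  have hπ := Real.pi_pos
  set φ : Ω → ℝ × ℝ × ℝ := fun ω => (F ω, G ω) with hφdef
  have hφ : Measurable φ := hmeasF.prodMk hmeasG
  set μ : Measure (ℝ × ℝ × ℝ) := Measure.map φ volume with hμdef
  haveI : IsProbabilityMeasure μ := Measure.isProbabilityMeasure_map hφ.aemeasurable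
  -- measurable integrands
  have hΦm : Measurable (fun p : ℝ × ℝ × ℝ => h p.1 * g p.2) :=
    (hmeas.comp measurable_fst).mul (hgm.comp measurable_snd)
  have hwm : Measurable (fun p : ℝ × ℝ × ℝ => |h p.1| * (p.2.1 ^ 2 + p.2.2 ^ 2)) :=
    ((hmeas.comp measurable_fst).abs).mul
      (((measurable_fst.comp measurable_snd).pow_const 2).add
        ((measurable_snd.comp measurable_snd).pow_const 2))
  have hA : ∫ ω, h (F ω) * g (G ω) = ∫ p, h p.1 * g p.2 ∂μ := by
    rw [hμdef, integral_map hφ.aemeasurable hΦm.aestronglyMeasurable]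
  have hA2 : ∫ ω, h (F ω) * ((G ω).1 ^ 2 + (G ω).2 ^ 2)
      = ∫ p, h p.1 * (p.2.1 ^ 2 + p.2.2 ^ 2) ∂μ := by
    rw [hμdef, integral_map hφ.aemeasurable]
    exact ((hmeas.comp measurable_fst).mul
      (((measurable_fst.comp measurable_snd).pow_const 2).add
        ((measurable_snd.comp measurable_snd).pow_const 2))).aestronglyMeasurable
  have hw : Integrable (fun p : ℝ × ℝ × ℝ => |h p.1| * (p.2.1 ^ 2 + p.2.2 ^ 2)) μ := by
    rw [hμdef]
    refine (integrable_map_measure hwm.aestronglyMeasurable hφ.aemeasurable).2 ?_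
    simpa [Function.comp_def] using hint
  -- rotation invariance of the h·g integral
  have hB : ∀ θ : ℝ,
      (∫ p : ℝ × ℝ × ℝ, h p.1 * g (Real.cos θ * p.2.1 - Real.sin θ * p.2.2,
        Real.sin θ * p.2.1 + Real.cos θ * p.2.2) ∂μ) = ∫ p, h p.1 * g p.2 ∂μ := by
    intro θ
    set ψθ : Ω → ℝ × ℝ × ℝ := fun ω => (F ω, (Real.cos θ * (G ω).1 - Real.sin θ * (G ω).2,
      Real.sin θ * (G ω).1 + Real.cos θ * (G ω).2)) with hψθdef
    have hψθ : Measurable ψθ := by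
      refine hmeasF.prodMk (Measurable.prodMk ?_ ?_)
      · exact (measurable_const.mul hmeasG.fst).sub (measurable_const.mul hmeasG.snd)
      · exact (measurable_const.mul hmeasG.fst).add (measurable_const.mul hmeasG.snd)
    have hm2 : Measurable (fun p : ℝ × ℝ × ℝ => h p.1 *
        g (Real.cos θ * p.2.1 - Real.sin θ * p.2.2, Real.sin θ * p.2.1 + Real.cos θ * p.2.2)) := by
      refine (hmeas.comp measurable_fst).mul (hgm.comp (Measurable.prodMk ?_ ?_))
      · exact (measurable_const.mul (measurable_fst.comp measurable_snd)).sub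
          (measurable_const.mul (measurable_snd.comp measurable_snd))
      · exact (measurable_const.mul (measurable_fst.comp measurable_snd)).add
          (measurable_const.mul (measurable_snd.comp measurable_snd))
    calc (∫ p : ℝ × ℝ × ℝ, h p.1 * g (Real.cos θ * p.2.1 - Real.sin θ * p.2.2,
            Real.sin θ * p.2.1 + Real.cos θ * p.2.2) ∂μ)
        = ∫ ω, h (F ω) * g (Real.cos θ * (G ω).1 - Real.sin θ * (G ω).2,
            Real.sin θ * (G ω).1 + Real.cos θ * (G ω).2) := by
          rw [hμdef, integral_map hφ.aemeasurable hm2.aestronglyMeasurable]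
      _ = ∫ p, h p.1 * g p.2 ∂(Measure.map ψθ volume) := by
          rw [integral_map hψθ.aemeasurable hΦm.aestronglyMeasurable]
      _ = ∫ p, h p.1 * g p.2 ∂μ := by rw [hψθdef, hrot θ, hμdef]
  -- Fubini
  set ν : Measure ℝ := volume.restrict (Set.Ioc (0:ℝ) (2*π)) with hνdef
  haveI : IsFiniteMeasure ν := ⟨by
    rw [hνdef, Measure.restrict_apply_univ]; exact measure_Ioc_lt_top⟩
  set K : ℝ → ℝ × ℝ × ℝ → ℝ := fun θ p => h p.1 *
    g (Real.cos θ * p.2.1 - Real.sin θ * p.2.2, Real.sin θ * p.2.1 + Real.cos θ * p.2.2)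
    with hKdef
  have hKm : Measurable (Function.uncurry K) := by
    refine ((hmeas.comp (measurable_fst.comp measurable_snd)).mul
      (hgm.comp (Measurable.prodMk ?_ ?_)))
    · exact ((Real.continuous_cos.measurable.comp measurable_fst).mul
        ((measurable_fst.comp measurable_snd).comp measurable_snd)).sub
        ((Real.continuous_sin.measurable.comp measurable_fst).mul
        ((measurable_snd.comp measurable_snd).comp measurable_snd))
    · exact ((Real.continuous_sin.measurable.comp measurable_fst).mul
        ((measurable_fst.comp measurable_snd).comp measurable_snd)).add
        ((Real.continuous_cos.measurable.comp measurable_fst).mul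
        ((measurable_snd.comp measurable_snd).comp measurable_snd))
  have hKint : Integrable (Function.uncurry K) (ν.prod μ) := by
    have hdom : Integrable (fun q : ℝ × (ℝ × ℝ × ℝ) =>
        (1:ℝ) * (|h q.2.1| * (q.2.2.1 ^ 2 + q.2.2.2 ^ 2))) (ν.prod μ) :=
      (integrable_const (1:ℝ)).mul_prod hw
    refine hdom.mono' hKm.aestronglyMeasurable ?_
    refine Filter.Eventually.of_forall fun q => ?_
    have hnorm : (Real.cos q.1 * q.2.2.1 - Real.sin q.1 * q.2.2.2) ^ 2
        + (Real.sin q.1 * q.2.2.1 + Real.cos q.1 * q.2.2.2) ^ 2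
        = q.2.2.1 ^ 2 + q.2.2.2 ^ 2 := by
      nlinarith [Real.sin_sq_add_cos_sq q.1]
    have := hgb (Real.cos q.1 * q.2.2.1 - Real.sin q.1 * q.2.2.2,
      Real.sin q.1 * q.2.2.1 + Real.cos q.1 * q.2.2.2)
    simp only [hKdef, Function.uncurry, Real.norm_eq_abs, one_mul, abs_mul]
    have h2 : |g (Real.cos q.1 * q.2.2.1 - Real.sin q.1 * q.2.2.2,
        Real.sin q.1 * q.2.2.1 + Real.cos q.1 * q.2.2.2)| ≤ q.2.2.1 ^ 2 + q.2.2.2 ^ 2 := by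
      simpa [hnorm] using this
    exact mul_le_mul_of_nonneg_left h2 (abs_nonneg _)
  have hswap := MeasureTheory.integral_integral_swap hKint
  -- LHS of hswap
  have hL : (∫ θ, ∫ p, K θ p ∂μ ∂ν) = (2*π) * ∫ p, h p.1 * g p.2 ∂μ := by
    have : ∀ θ : ℝ, (∫ p, K θ p ∂μ) = ∫ p, h p.1 * g p.2 ∂μ := fun θ => hB θ
    rw [integral_congr_ae (Filter.Eventually.of_forall this)]
    rw [hνdef, integral_const, measureReal_restrict_apply_univ,
      Real.volume_real_Ioc_of_le (by linarith), smul_eq_mul]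
    ring_nf
  -- RHS of hswap
  have hR : (∫ p, ∫ θ, K θ p ∂ν ∂μ)
      = (π - 2) / 8 * ∫ p : ℝ × ℝ × ℝ, h p.1 * (p.2.1 ^ 2 + p.2.2 ^ 2) ∂μ := by
    have hinner : ∀ p : ℝ × ℝ × ℝ, (∫ θ, K θ p ∂ν)
        = (π - 2) / 8 * (h p.1 * (p.2.1 ^ 2 + p.2.2 ^ 2)) := by
      intro p
      rw [hKdef]
      simp only []
      rw [hνdef, ← intervalIntegral.integral_of_le (by linarith : (0:ℝ) ≤ 2*π),
        intervalIntegral.integral_const_mul, hang p.2]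
      ring
    rw [integral_congr_ae (Filter.Eventually.of_forall hinner), integral_const_mul]
  rw [hL, hR] at hswap
  rw [hA, hA2]
  have hπ' : π ≠ 0 := Real.pi_ne_zero
  field_simp
  linear_combination 8 * hswap

private lemma g1_meas : Measurable (fun v : ℝ × ℝ =>
    (if v.2 < v.1 ∧ v.1 < 0 then (1:ℝ) else 0) * v.1 ^ 2) := by
  apply Measurable.mul
  · exact Measurable.ite
      ((measurableSet_lt measurable_snd measurable_fst).inter
        (measurableSet_lt measurable_fst measurable_const))
      measurable_const measurable_const
  · exact measurable_fst.pow_const 2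

private lemma g2_meas : Measurable (fun v : ℝ × ℝ =>
    (if v.1 < v.2 ∧ v.2 < 0 then (1:ℝ) else 0) * v.2 ^ 2) := by
  apply Measurable.mul
  · exact Measurable.ite
      ((measurableSet_lt measurable_fst measurable_snd).inter
        (measurableSet_lt measurable_snd measurable_const))
      measurable_const measurable_const
  · exact measurable_snd.pow_const 2

private lemma g1_bd (v : ℝ × ℝ) :
    |(if v.2 < v.1 ∧ v.1 < 0 then (1:ℝ) else 0) * v.1 ^ 2| ≤ v.1 ^ 2 + v.2 ^ 2 := by
  split_ifs with hh
  · rw [one_mul, abs_of_nonneg (sq_nonneg _)]; nlinarith [sq_nonneg v.2]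
  · simp; positivity

private lemma g2_bd (v : ℝ × ℝ) :
    |(if v.1 < v.2 ∧ v.2 < 0 then (1:ℝ) else 0) * v.2 ^ 2| ≤ v.1 ^ 2 + v.2 ^ 2 := by
  split_ifs with hh
  · rw [one_mul, abs_of_nonneg (sq_nonneg _)]; nlinarith [sq_nonneg v.1]
  · simp; positivity


/-- if f is a C¹ random field on ℝ² such that, jointly with f(0), the
gradient ∇f(0) has a rotation-invariant conditional law (formalized: for every angle θ
the joint law of (f(0), r_θ ∇f(0)) equals that of (f(0), ∇f(0))), then for any bounded
measurable h and i = 1,2: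
E[h(f(0)) 1_{∇f(0) ∈ Q_i} (∂_i f(0))²] = ((π−2)/(16π)) E[h(f(0)) ‖∇f(0)‖²]. -/
theorem stmt19 {Ω : Type*} [MeasureSpace Ω]
    [IsProbabilityMeasure (volume : Measure Ω)]
    (f : Ω → ℝ × ℝ → ℝ) (hdiff : ∀ ω, Differentiable ℝ (f ω))
    (F : Ω → ℝ) (G : Ω → ℝ × ℝ)
    (hF : ∀ ω, F ω = f ω 0)
    (hG : ∀ ω, G ω = (fderiv ℝ (f ω) 0 (1, 0), fderiv ℝ (f ω) 0 (0, 1)))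
    (hmeasF : Measurable F) (hmeasG : Measurable G)
    (hrot : ∀ θ : ℝ,
      Measure.map (fun ω => (F ω, (Real.cos θ * (G ω).1 - Real.sin θ * (G ω).2,
                                   Real.sin θ * (G ω).1 + Real.cos θ * (G ω).2)))
          (volume : Measure Ω)
        = Measure.map (fun ω => (F ω, G ω)) (volume : Measure Ω))
    (h : ℝ → ℝ) (hmeas : Measurable h) (hbd : ∃ c : ℝ, ∀ t, |h t| ≤ c)
    (hint : Integrable (fun ω => |h (F ω)| * ((G ω).1 ^ 2 + (G ω).2 ^ 2))) :
    (∫ ω, h (F ω) * (if (G ω).2 < (G ω).1 ∧ (G ω).1 < 0 then (1 : ℝ) else 0)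
        * (G ω).1 ^ 2)
      = (π - 2) / (16 * π) * ∫ ω, h (F ω) * ((G ω).1 ^ 2 + (G ω).2 ^ 2) ∧
    (∫ ω, h (F ω) * (if (G ω).1 < (G ω).2 ∧ (G ω).2 < 0 then (1 : ℝ) else 0)
        * (G ω).2 ^ 2)
      = (π - 2) / (16 * π) * ∫ ω, h (F ω) * ((G ω).1 ^ 2 + (G ω).2 ^ 2) := by
  constructor
  · have hk := key F G hmeasF hmeasG hrot h hmeas hint
      (fun v : ℝ × ℝ => (if v.2 < v.1 ∧ v.1 < 0 then (1:ℝ) else 0) * v.1 ^ 2)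
      g1_meas g1_bd (fun v => ang1 v)
    simpa only [mul_assoc] using hk
  · have hk := key F G hmeasF hmeasG hrot h hmeas hint
      (fun v : ℝ × ℝ => (if v.1 < v.2 ∧ v.2 < 0 then (1:ℝ) else 0) * v.2 ^ 2)
      g2_meas g2_bd (fun v => ang2 v)
    simpa only [mul_assoc] using hk
end
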